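/- arXiv:1709.08571 — 2 statements merged into one kernel-verified Lean document; each statement's English description precedes it below -/
import Mathlib

section
/- Let f : ℝ^d → ℝ be twice continuously differentiable with L1-Lipschitz gradient and L2-Lipschitz Hessian, let ε₁, ε₂ > 0, and let x₀ satisfy f(x₀) − inf f ≤ Δ < ∞. Suppose x₁ = x₀ and (v_j) are unit vectors such that for every j: (i) λ_min(∇²f(x_j)) ≥ v_jᵀ∇²f(x_j)v_j − max(ε₂, ‖∇f(x_j)‖)/2 and v_jᵀ∇²f(x_j)v_j ≤ 0; (ii) x_{j+1} = x_j − (2·|v_jᵀ∇²f(x_j)v_j|/L2)·sign(v_jᵀ∇f(x_j))·v_j if 2·|v_jᵀ∇²f(x_j)v_j|³/(3·L2²) > ‖∇f(x_j)‖²/(2·L1), and x_{j+1} = x_j − (1/L1)·∇f(x_j) otherwise. Then the first index j* such that v_{j*}ᵀ∇²f(x_{j*})v_{j*} > −ε₂/2 and ‖∇f(x_{j*})‖ ≤ ε₁ satisfies j* ≤ 1 + max(12·L2²/ε₂³, 2·L1/ε₁²)·(f(x₁) − f(x_{j*})) ≤ 1 + max(12·L2²/ε₂³, 2·L1/ε₁²)·Δ,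 and at termination ‖∇f(x_{j*})‖ ≤ ε₁ and λ_min(∇²f(x_{j*})) ≥ −max(ε₂, ε₁). -/
open scoped RealInnerProductSpace

noncomputable def sgn (t : ℝ) : ℝ := if 0 ≤ t then 1 else -1

theorem NCG_sgn_abs (t : ℝ) : sgn t * t = |t| := by
  unfold sgn; split
  · rename_i h; rw [abs_of_nonneg h]; ring
  · rename_i h; push_neg at h; rw [abs_of_neg h]; ring

theorem NCG_abs_sgn (t : ℝ) : |sgn t| = 1 := by
  unfold sgn; split <;> norm_num

theorem NCG_gradient_contDiff {d : ℕ} {f : EuclideanSpace ℝ (Fin d) → ℝ}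
    (hf : ContDiff ℝ 2 f) : ContDiff ℝ 1 (gradient f) := by
  have h1 : ContDiff ℝ 1 (fderiv ℝ f) := hf.fderiv_right (by norm_num)
  exact ((InnerProductSpace.toDual ℝ _).symm.toContinuousLinearEquiv :
    (EuclideanSpace ℝ (Fin d) →L[ℝ] ℝ) ≃L[ℝ] EuclideanSpace ℝ (Fin d)).contDiff.comp h1

theorem NCG_fun_deriv {d : ℕ} {f : EuclideanSpace ℝ (Fin d) → ℝ} (hf : ContDiff ℝ 2 f)
    (x h : EuclideanSpace ℝ (Fin d)) (t : ℝ) :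
    HasDerivAt (fun s : ℝ => f (x + s • h)) ⟪gradient f (x + t • h), h⟫ t := by
  have hfd : Differentiable ℝ f := hf.differentiable (by norm_num)
  have hcurve : HasDerivAt (fun s : ℝ => x + s • h) h t := by
    simpa using ((hasDerivAt_id t).smul_const h).const_add x
  have h1 : HasDerivAt (fun s : ℝ => f (x + s • h)) (fderiv ℝ f (x + t • h) h) t :=
    (hfd (x + t • h)).hasFDerivAt.comp_hasDerivAt t hcurve
  have h2 : fderiv ℝ f (x + t • h) h = ⟪gradient f (x + t • h), h⟫ := by
    rw [gradient]
    have := (InnerProductSpace.toDual ℝ (EuclideanSpace ℝ (Fin d))).apply_symm_apply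
      (fderiv ℝ f (x + t • h))
    conv_lhs => rw [← this]
    simp [InnerProductSpace.toDual_apply_apply]
  rwa [h2] at h1

theorem NCG_int_repr {d : ℕ} {f : EuclideanSpace ℝ (Fin d) → ℝ} (hf : ContDiff ℝ 2 f)
    (x h : EuclideanSpace ℝ (Fin d)) :
    f (x + h) - f x = ∫ t in (0:ℝ)..1, ⟪gradient f (x + t • h), h⟫ := by
  have hcont : Continuous fun t : ℝ => ⟪gradient f (x + t • h), h⟫ := by
    have hc2 : Continuous fun t : ℝ => x + t • h :=
      continuous_const.add (continuous_id.smul continuous_const)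
    exact (((NCG_gradient_contDiff hf).continuous.comp hc2).inner continuous_const)
  have := intervalIntegral.integral_eq_sub_of_hasDerivAt
    (fun t _ => NCG_fun_deriv hf x h t) (hcont.intervalIntegrable 0 1)
  rw [this]; simp

theorem NCG_grad_taylor {d : ℕ} {f : EuclideanSpace ℝ (Fin d) → ℝ} {L2 : ℝ}
    (hf : ContDiff ℝ 2 f) (hL2 : 0 ≤ L2)
    (hHlip : ∀ a b : EuclideanSpace ℝ (Fin d),
      ‖fderiv ℝ (gradient f) a - fderiv ℝ (gradient f) b‖ ≤ L2 * ‖a - b‖)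
    (x w : EuclideanSpace ℝ (Fin d)) :
    ‖gradient f (x + w) - gradient f x - fderiv ℝ (gradient f) x w‖ ≤ L2 / 2 * ‖w‖ ^ 2 := by
  set g := gradient f with hgdef
  have hg : ContDiff ℝ 1 g := NCG_gradient_contDiff hf
  have hgd : Differentiable ℝ g := hg.differentiable (by norm_num)
  have hcurve : ∀ t : ℝ, HasDerivAt (fun s : ℝ => x + s • w) w t := fun t => by
    simpa using ((hasDerivAt_id t).smul_const w).const_add x
  have hψ : ∀ t : ℝ, HasDerivAt (fun s : ℝ => g (x + s • w) - s • (fderiv ℝ g x w))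
      (fderiv ℝ g (x + t • w) w - fderiv ℝ g x w) t := by
    intro t
    have h1 : HasDerivAt (fun s : ℝ => g (x + s • w)) (fderiv ℝ g (x + t • w) w) t :=
      ((hgd (x + t • w)).hasFDerivAt.comp_hasDerivAt (l := g) t (hcurve t))
    have h2 : HasDerivAt (fun s : ℝ => s • (fderiv ℝ g x w)) (fderiv ℝ g x w) t := by
      simpa using (hasDerivAt_id t).smul_const (fderiv ℝ g x w)
    exact h1.sub h2
  have hcont : Continuous fun t : ℝ => fderiv ℝ g (x + t • w) w - fderiv ℝ g x w := by
    have hc : Continuous (fderiv ℝ g) := (hg.fderiv_right (m := 0) le_rfl).continuous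
    have hc2 : Continuous fun t : ℝ => x + t • w :=
      continuous_const.add (continuous_id.smul continuous_const)
    exact ((hc.comp hc2).clm_apply continuous_const).sub continuous_const
  have key : ∫ t in (0:ℝ)..1, (fderiv ℝ g (x + t • w) w - fderiv ℝ g x w) =
      (g (x + (1:ℝ) • w) - (1:ℝ) • (fderiv ℝ g x w)) -
        (g (x + (0:ℝ) • w) - (0:ℝ) • (fderiv ℝ g x w)) :=
    intervalIntegral.integral_eq_sub_of_hasDerivAt (fun t _ => hψ t)
      (hcont.intervalIntegrable 0 1)
  have heq : g (x + w) - g x - fderiv ℝ g x w =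
      ∫ t in (0:ℝ)..1, (fderiv ℝ g (x + t • w) w - fderiv ℝ g x w) := by
    rw [key]; simp; abel
  rw [heq]
  have hval : ∫ t in (0:ℝ)..1, L2 * t * ‖w‖ ^ 2 = L2 / 2 * ‖w‖ ^ 2 := by
    have h2 : ∫ t in (0:ℝ)..1, L2 * t * ‖w‖ ^ 2 = (L2 * ‖w‖ ^ 2) * ∫ t in (0:ℝ)..1, t := by
      rw [← intervalIntegral.integral_const_mul]
      congr 1; ext t; ring
    rw [h2, integral_id]; ring
  have hbound : ‖∫ t in (0:ℝ)..1, (fderiv ℝ g (x + t • w) w - fderiv ℝ g x w)‖ ≤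
      |∫ t in (0:ℝ)..1, L2 * t * ‖w‖ ^ 2| := by
    apply intervalIntegral.norm_integral_le_abs_of_norm_le
    · filter_upwards [MeasureTheory.ae_restrict_mem measurableSet_uIoc] with t ht
      have ht0 : 0 ≤ t := by
        rw [Set.uIoc_of_le (zero_le_one)] at ht
        exact ht.1.le
      have : fderiv ℝ g (x + t • w) w - fderiv ℝ g x w =
          (fderiv ℝ g (x + t • w) - fderiv ℝ g x) w := by simp
      rw [this]
      calc ‖(fderiv ℝ g (x + t • w) - fderiv ℝ g x) w‖
          ≤ ‖fderiv ℝ g (x + t • w) - fderiv ℝ g x‖ * ‖w‖ :=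
            (fderiv ℝ g (x + t • w) - fderiv ℝ g x).le_opNorm w
        _ ≤ (L2 * ‖(x + t • w) - x‖) * ‖w‖ := by
            gcongr; exact hHlip _ _
        _ = L2 * t * ‖w‖ ^ 2 := by
            simp [norm_smul, abs_of_nonneg ht0]; ring
    · apply Continuous.intervalIntegrable
      exact (continuous_const.mul continuous_id).mul continuous_const
  rw [hval, abs_of_nonneg (by positivity)] at hbound
  exact hbound

theorem NCG_taylor1 {d : ℕ} {f : EuclideanSpace ℝ (Fin d) → ℝ} {L1 : ℝ} (hf : ContDiff ℝ 2 f)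
    (hglip : ∀ a b : EuclideanSpace ℝ (Fin d),
      ‖gradient f a - gradient f b‖ ≤ L1 * ‖a - b‖)
    (x h : EuclideanSpace ℝ (Fin d)) :
    f (x + h) ≤ f x + ⟪gradient f x, h⟫ + L1 / 2 * ‖h‖ ^ 2 := by
  have hrepr := NCG_int_repr hf x h
  have hcont : Continuous fun t : ℝ => ⟪gradient f (x + t • h), h⟫ :=
    (((NCG_gradient_contDiff hf).continuous).comp
      (continuous_const.add (continuous_id.smul continuous_const))).inner continuous_const
  have hmono : ∫ t in (0:ℝ)..1, ⟪gradient f (x + t • h), h⟫ ≤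
      ∫ t in (0:ℝ)..1, (⟪gradient f x, h⟫ + L1 * t * ‖h‖ ^ 2) := by
    apply intervalIntegral.integral_mono_on zero_le_one
      (hcont.intervalIntegrable 0 1)
      (by apply Continuous.intervalIntegrable; fun_prop)
    intro t ht
    have key : ⟪gradient f (x + t • h) - gradient f x, h⟫ ≤ L1 * t * ‖h‖ ^ 2 := by
      calc ⟪gradient f (x + t • h) - gradient f x, h⟫
          ≤ ‖gradient f (x + t • h) - gradient f x‖ * ‖h‖ := real_inner_le_norm _ _
        _ ≤ (L1 * ‖(x + t • h) - x‖) * ‖h‖ := by gcongr; exact hglip _ _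
        _ = L1 * t * ‖h‖ ^ 2 := by
            simp [norm_smul, abs_of_nonneg ht.1]; ring
    have : ⟪gradient f (x + t • h), h⟫ =
        ⟪gradient f x, h⟫ + ⟪gradient f (x + t • h) - gradient f x, h⟫ := by
      rw [inner_sub_left]; ring
    linarith
  have hval : ∫ t in (0:ℝ)..1, (⟪gradient f x, h⟫ + L1 * t * ‖h‖ ^ 2) =
      ⟪gradient f x, h⟫ + L1 / 2 * ‖h‖ ^ 2 := by
    rw [intervalIntegral.integral_add (by apply Continuous.intervalIntegrable; fun_prop)
      (by apply Continuous.intervalIntegrable; fun_prop)]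
    have h2 : ∫ t in (0:ℝ)..1, L1 * t * ‖h‖ ^ 2 = (L1 * ‖h‖ ^ 2) * ∫ t in (0:ℝ)..1, t := by
      rw [← intervalIntegral.integral_const_mul]; congr 1; ext t; ring
    rw [h2, integral_id]
    simp; ring
  rw [hval] at hmono
  linarith [hrepr ▸ hmono]

theorem NCG_taylor2 {d : ℕ} {f : EuclideanSpace ℝ (Fin d) → ℝ} {L2 : ℝ} (hf : ContDiff ℝ 2 f)
    (hL2 : 0 ≤ L2)
    (hHlip : ∀ a b : EuclideanSpace ℝ (Fin d),
      ‖fderiv ℝ (gradient f) a - fderiv ℝ (gradient f) b‖ ≤ L2 * ‖a - b‖)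
    (x h : EuclideanSpace ℝ (Fin d)) :
    f (x + h) ≤ f x + ⟪gradient f x, h⟫ + 1 / 2 * ⟪fderiv ℝ (gradient f) x h, h⟫ +
      L2 / 6 * ‖h‖ ^ 3 := by
  have hrepr := NCG_int_repr hf x h
  have hcont : Continuous fun t : ℝ => ⟪gradient f (x + t • h), h⟫ :=
    (((NCG_gradient_contDiff hf).continuous).comp
      (continuous_const.add (continuous_id.smul continuous_const))).inner continuous_const
  set H := fderiv ℝ (gradient f) x with hH
  have hmono : ∫ t in (0:ℝ)..1, ⟪gradient f (x + t • h), h⟫ ≤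
      ∫ t in (0:ℝ)..1, (⟪gradient f x, h⟫ + t * ⟪H h, h⟫ + L2 / 2 * t ^ 2 * ‖h‖ ^ 3) := by
    apply intervalIntegral.integral_mono_on zero_le_one
      (hcont.intervalIntegrable 0 1)
      (by apply Continuous.intervalIntegrable; fun_prop)
    intro t ht
    have hgt := NCG_grad_taylor hf hL2 hHlip x (t • h)
    have hlin : H (t • h) = t • H h := by simp
    have key : ⟪gradient f (x + t • h) - gradient f x - t • H h, h⟫ ≤
        L2 / 2 * t ^ 2 * ‖h‖ ^ 3 := by
      calc ⟪gradient f (x + t • h) - gradient f x - t • H h, h⟫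
          ≤ ‖gradient f (x + t • h) - gradient f x - t • H h‖ * ‖h‖ :=
            real_inner_le_norm _ _
        _ ≤ (L2 / 2 * ‖t • h‖ ^ 2) * ‖h‖ := by
            gcongr
            rw [← hlin]; exact hgt
        _ = L2 / 2 * t ^ 2 * ‖h‖ ^ 3 := by
            rw [norm_smul, Real.norm_eq_abs, mul_pow, sq_abs]; ring
    have hexp : ⟪gradient f (x + t • h), h⟫ =
        ⟪gradient f x, h⟫ + t * ⟪H h, h⟫ +
          ⟪gradient f (x + t • h) - gradient f x - t • H h, h⟫ := by
      rw [inner_sub_left, inner_sub_left, real_inner_smul_left]; ring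
    linarith
  have hval : ∫ t in (0:ℝ)..1, (⟪gradient f x, h⟫ + t * ⟪H h, h⟫ + L2 / 2 * t ^ 2 * ‖h‖ ^ 3)
      = ⟪gradient f x, h⟫ + 1 / 2 * ⟪H h, h⟫ + L2 / 6 * ‖h‖ ^ 3 := by
    rw [intervalIntegral.integral_add (by apply Continuous.intervalIntegrable; fun_prop)
      (by apply Continuous.intervalIntegrable; fun_prop),
      intervalIntegral.integral_add (by apply Continuous.intervalIntegrable; fun_prop)
        (by apply Continuous.intervalIntegrable; fun_prop)]
    have h1 : ∫ t in (0:ℝ)..1, t * ⟪H h, h⟫ = ⟪H h, h⟫ * ∫ t in (0:ℝ)..1, t := by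
      rw [← intervalIntegral.integral_const_mul]; congr 1; ext t; ring
    have h2 : ∫ t in (0:ℝ)..1, L2 / 2 * t ^ 2 * ‖h‖ ^ 3 =
        (L2 / 2 * ‖h‖ ^ 3) * ∫ t in (0:ℝ)..1, t ^ 2 := by
      rw [← intervalIntegral.integral_const_mul]; congr 1; ext t; ring
    rw [h1, h2, integral_id, integral_pow]
    simp; ring
  rw [hval] at hmono
  linarith [hrepr ▸ hmono]

theorem NCG_gd_decrease {d : ℕ} {f : EuclideanSpace ℝ (Fin d) → ℝ} {L1 : ℝ} (hL1 : 0 < L1)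
    (hf : ContDiff ℝ 2 f)
    (hglip : ∀ a b : EuclideanSpace ℝ (Fin d),
      ‖gradient f a - gradient f b‖ ≤ L1 * ‖a - b‖)
    (x : EuclideanSpace ℝ (Fin d)) :
    f (x - (1 / L1) • gradient f x) ≤ f x - ‖gradient f x‖ ^ 2 / (2 * L1) := by
  have h := NCG_taylor1 hf hglip x (-((1 / L1) • gradient f x))
  rw [← sub_eq_add_neg] at h
  have h1 : ⟪gradient f x, -((1 / L1) • gradient f x)⟫ = -(1 / L1) * ‖gradient f x‖ ^ 2 := by
    rw [inner_neg_right, real_inner_smul_right, real_inner_self_eq_norm_sq]; ring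
  have h2 : ‖-((1 / L1) • gradient f x)‖ ^ 2 = (1 / L1) ^ 2 * ‖gradient f x‖ ^ 2 := by
    rw [norm_neg, norm_smul, Real.norm_eq_abs, mul_pow, sq_abs]
  rw [h1, h2] at h
  have : f x + -(1 / L1) * ‖gradient f x‖ ^ 2 + L1 / 2 * ((1 / L1) ^ 2 * ‖gradient f x‖ ^ 2)
      = f x - ‖gradient f x‖ ^ 2 / (2 * L1) := by
    field_simp; ring
  linarith [this ▸ h]

theorem NCG_nc_decrease {d : ℕ} {f : EuclideanSpace ℝ (Fin d) → ℝ} {L2 : ℝ} (hL2 : 0 < L2)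
    (hf : ContDiff ℝ 2 f)
    (hHlip : ∀ a b : EuclideanSpace ℝ (Fin d),
      ‖fderiv ℝ (gradient f) a - fderiv ℝ (gradient f) b‖ ≤ L2 * ‖a - b‖)
    (x v : EuclideanSpace ℝ (Fin d)) (hv : ‖v‖ = 1)
    (hqneg : ⟪fderiv ℝ (gradient f) x v, v⟫ ≤ 0) :
    f (x - ((2 * |⟪fderiv ℝ (gradient f) x v, v⟫| / L2) * sgn ⟪gradient f x, v⟫) • v) ≤
      f x - 2 * |⟪fderiv ℝ (gradient f) x v, v⟫| ^ 3 / (3 * L2 ^ 2) := by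
  set H := fderiv ℝ (gradient f) x with hH
  set q : ℝ := ⟪H v, v⟫ with hq
  set g := gradient f x with hg
  set s : ℝ := sgn ⟪g, v⟫ with hs
  set A : ℝ := |q| with hA
  set η : ℝ := 2 * A / L2 with hη
  have hA0 : 0 ≤ A := abs_nonneg _
  have hη0 : 0 ≤ η := by positivity
  have hqA : q = -A := by rw [hA, abs_of_nonpos hqneg]; ring
  have hth := NCG_taylor2 hf hL2.le hHlip x (-((η * s) • v))
  rw [← sub_eq_add_neg] at hth
  have h1 : ⟪g, -((η * s) • v)⟫ ≤ 0 := by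
    rw [inner_neg_right, real_inner_smul_right]
    have : s * ⟪g, v⟫ = |⟪g, v⟫| := NCG_sgn_abs _
    nlinarith [abs_nonneg ⟪g, v⟫]
  have h2 : ⟪H (-((η * s) • v)), -((η * s) • v)⟫ = (η * s) ^ 2 * q := by
    rw [map_neg, map_smul, inner_neg_neg, real_inner_smul_left, real_inner_smul_right,
      ← hq]
    ring
  have h3 : ‖-((η * s) • v)‖ = η := by
    rw [norm_neg, norm_smul, Real.norm_eq_abs, abs_mul, NCG_abs_sgn, hv]
    rw [abs_of_nonneg hη0]; ring
  rw [h2, h3] at hth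
  have hs2 : s ^ 2 = 1 := by
    have := NCG_abs_sgn ⟪g, v⟫; nlinarith [sq_abs s]
  have harith : f x + ⟪g, -((η * s) • v)⟫ + 1 / 2 * ((η * s) ^ 2 * q) + L2 / 6 * η ^ 3 ≤
      f x - 2 * A ^ 3 / (3 * L2 ^ 2) := by
    have hL2' : L2 ≠ 0 := hL2.ne'
    have heq : 1 / 2 * ((η * s) ^ 2 * q) + L2 / 6 * η ^ 3 = -(2 * A ^ 3 / (3 * L2 ^ 2)) := by
      rw [mul_pow, hs2, hqA, hη]
      field_simp
      ring
    linarith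
  exact le_trans hth harith

/-- Theorem on NCG-A1: convergence guarantee of the NCG-A1 algorithm. -/
theorem NCG_A1_guarantee {d : ℕ}
    (f : EuclideanSpace ℝ (Fin d) → ℝ) (L1 L2 ε₁ ε₂ Δ : ℝ)
    (hL1 : 0 < L1) (hL2 : 0 < L2) (hε₁ : 0 < ε₁) (hε₂ : 0 < ε₂)
    (hf : ContDiff ℝ 2 f)
    (hglip : ∀ a b : EuclideanSpace ℝ (Fin d),
      ‖gradient f a - gradient f b‖ ≤ L1 * ‖a - b‖)
    (hHlip : ∀ a b : EuclideanSpace ℝ (Fin d),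
      ‖fderiv ℝ (gradient f) a - fderiv ℝ (gradient f) b‖ ≤ L2 * ‖a - b‖)
    (x₀ : EuclideanSpace ℝ (Fin d))
    (hΔ : ∀ z : EuclideanSpace ℝ (Fin d), f x₀ - f z ≤ Δ)
    (x v : ℕ → EuclideanSpace ℝ (Fin d))
    (hx1 : x 1 = x₀)
    (hv : ∀ j : ℕ, 1 ≤ j → ‖v j‖ = 1)
    (hvneg : ∀ j : ℕ, 1 ≤ j → ⟪(fderiv ℝ (gradient f) (x j)) (v j), v j⟫ ≤ 0)
    (hmin : ∀ j : ℕ, 1 ≤ j → ∀ u : EuclideanSpace ℝ (Fin d), ‖u‖ = 1 →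
      ⟪(fderiv ℝ (gradient f) (x j)) u, u⟫ ≥
        ⟪(fderiv ℝ (gradient f) (x j)) (v j), v j⟫ -
          max ε₂ ‖gradient f (x j)‖ / 2)
    (hupd : ∀ j : ℕ, 1 ≤ j →
      x (j + 1) =
        if 2 * |⟪(fderiv ℝ (gradient f) (x j)) (v j), v j⟫| ^ 3 / (3 * L2 ^ 2) >
            ‖gradient f (x j)‖ ^ 2 / (2 * L1) then
          x j - ((2 * |⟪(fderiv ℝ (gradient f) (x j)) (v j), v j⟫| / L2) *
            sgn ⟪gradient f (x j), v j⟫) • v j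
        else
          x j - (1 / L1) • gradient f (x j)) :
    ∃ jstar : ℕ, 1 ≤ jstar ∧
      (⟪(fderiv ℝ (gradient f) (x jstar)) (v jstar), v jstar⟫ > -ε₂ / 2 ∧
        ‖gradient f (x jstar)‖ ≤ ε₁) ∧
      (∀ i : ℕ, 1 ≤ i → i < jstar →
        ¬(⟪(fderiv ℝ (gradient f) (x i)) (v i), v i⟫ > -ε₂ / 2 ∧
          ‖gradient f (x i)‖ ≤ ε₁)) ∧
      (jstar : ℝ) ≤
        1 + max (12 * L2 ^ 2 / ε₂ ^ 3) (2 * L1 / ε₁ ^ 2) * (f (x 1) - f (x jstar)) ∧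
      (jstar : ℝ) ≤ 1 + max (12 * L2 ^ 2 / ε₂ ^ 3) (2 * L1 / ε₁ ^ 2) * Δ ∧
      ∀ u : EuclideanSpace ℝ (Fin d), ‖u‖ = 1 →
        ⟪(fderiv ℝ (gradient f) (x jstar)) u, u⟫ ≥ -(max ε₂ ε₁) := by
  classical
  set q : ℕ → ℝ := fun j => ⟪(fderiv ℝ (gradient f) (x j)) (v j), v j⟫ with hqdef
  set g : ℕ → EuclideanSpace ℝ (Fin d) := fun j => gradient f (x j) with hgdef
  set P : ℕ → Prop := fun j => q j > -ε₂ / 2 ∧ ‖g j‖ ≤ ε₁ with hPdef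
  set δ : ℝ := min (ε₂ ^ 3 / (12 * L2 ^ 2)) (ε₁ ^ 2 / (2 * L1)) with hδdef
  set M : ℝ := max (12 * L2 ^ 2 / ε₂ ^ 3) (2 * L1 / ε₁ ^ 2) with hMdef
  have hδ0 : 0 < δ := lt_min (by positivity) (by positivity)
  have hM0 : 0 < M := lt_of_lt_of_le (by positivity : (0:ℝ) < 12 * L2 ^ 2 / ε₂ ^ 3)
    (le_max_left _ _)
  -- per-step decrease
  have hdec : ∀ j, 1 ≤ j → f (x (j + 1)) ≤
      f (x j) - max (2 * |q j| ^ 3 / (3 * L2 ^ 2)) (‖g j‖ ^ 2 / (2 * L1)) := by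
    intro j hj
    rw [hupd j hj]
    split_ifs with hc
    · have := NCG_nc_decrease hL2 hf hHlip (x j) (v j) (hv j hj) (hvneg j hj)
      have hmax : max (2 * |q j| ^ 3 / (3 * L2 ^ 2)) (‖g j‖ ^ 2 / (2 * L1)) =
          2 * |q j| ^ 3 / (3 * L2 ^ 2) := max_eq_left hc.le
      rw [hmax]
      exact this
    · push_neg at hc
      have := NCG_gd_decrease hL1 hf hglip (x j)
      have hmax : max (2 * |q j| ^ 3 / (3 * L2 ^ 2)) (‖g j‖ ^ 2 / (2 * L1)) =
          ‖g j‖ ^ 2 / (2 * L1) := max_eq_right hc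
      rw [hmax]
      exact this
  -- non-terminated steps decrease by at least δ
  have hδstep : ∀ j, 1 ≤ j → ¬ P j →
      δ ≤ max (2 * |q j| ^ 3 / (3 * L2 ^ 2)) (‖g j‖ ^ 2 / (2 * L1)) := by
    intro j hj hnp
    by_cases hq2 : q j > -ε₂ / 2
    · have hg2 : ε₁ < ‖g j‖ := by
        by_contra hgle
        push_neg at hgle
        exact hnp ⟨hq2, hgle⟩
      calc δ ≤ ε₁ ^ 2 / (2 * L1) := min_le_right _ _
        _ ≤ ‖g j‖ ^ 2 / (2 * L1) := by gcongr
        _ ≤ _ := le_max_right _ _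
    · push_neg at hq2
      have habs : ε₂ / 2 ≤ |q j| := by
        rw [abs_of_nonpos (hvneg j hj)]
        linarith
      calc δ ≤ ε₂ ^ 3 / (12 * L2 ^ 2) := min_le_left _ _
        _ = 2 * (ε₂ / 2) ^ 3 / (3 * L2 ^ 2) := by ring
        _ ≤ 2 * |q j| ^ 3 / (3 * L2 ^ 2) := by gcongr
        _ ≤ _ := le_max_left _ _
  have key : ∀ n : ℕ, (∀ i, 1 ≤ i → i ≤ n → ¬ P i) →
      (n : ℝ) * δ ≤ f (x 1) - f (x (n + 1)) := by
    intro n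
    induction n with
    | zero => intro _; simp
    | succ n ih =>
      intro hall
      have h1 := ih (fun i hi1 hi2 => hall i hi1 (hi2.trans (Nat.le_succ n)))
      have h2 := hdec (n + 1) (Nat.succ_le_succ (Nat.zero_le n))
      have h3 := hδstep (n + 1) (Nat.succ_le_succ (Nat.zero_le n))
        (hall (n + 1) (Nat.succ_le_succ (Nat.zero_le n)) le_rfl)
      push_cast
      linarith
  -- existence of a terminated index
  have hPex : ∃ j, 1 ≤ j ∧ P j := by
    by_contra hno
    push_neg at hno
    obtain ⟨N, hN⟩ := exists_nat_gt (Δ / δ)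
    have hkey := key N (fun i hi _ => hno i hi)
    have hΔ' : f (x 1) - f (x (N + 1)) ≤ Δ := by rw [hx1]; exact hΔ _
    have : Δ < (N : ℝ) * δ := by
      rw [div_lt_iff₀ hδ0] at hN
      linarith
    linarith
  let jstar := Nat.find hPex
  obtain ⟨hj1, hjP⟩ : 1 ≤ jstar ∧ P jstar := Nat.find_spec hPex
  have hmin' : ∀ i, 1 ≤ i → i < jstar → ¬ P i := fun i hi1 hi2 hp =>
    Nat.find_min hPex hi2 ⟨hi1, hp⟩
  -- M * δ = 1
  have hMδ : M * δ = 1 := by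
    rcases le_total (ε₂ ^ 3 / (12 * L2 ^ 2)) (ε₁ ^ 2 / (2 * L1)) with hab | hab
    · have hδ' : δ = ε₂ ^ 3 / (12 * L2 ^ 2) := min_eq_left hab
      have hM' : M = 12 * L2 ^ 2 / ε₂ ^ 3 := by
        apply max_eq_left
        rw [show (12 * L2 ^ 2 / ε₂ ^ 3) = 1 / (ε₂ ^ 3 / (12 * L2 ^ 2)) by rw [one_div_div],
            show (2 * L1 / ε₁ ^ 2) = 1 / (ε₁ ^ 2 / (2 * L1)) by rw [one_div_div]]
        exact one_div_le_one_div_of_le (by positivity) hab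
      rw [hδ', hM']
      field_simp
    · have hδ' : δ = ε₁ ^ 2 / (2 * L1) := min_eq_right hab
      have hM' : M = 2 * L1 / ε₁ ^ 2 := by
        apply max_eq_right
        rw [show (12 * L2 ^ 2 / ε₂ ^ 3) = 1 / (ε₂ ^ 3 / (12 * L2 ^ 2)) by rw [one_div_div],
            show (2 * L1 / ε₁ ^ 2) = 1 / (ε₁ ^ 2 / (2 * L1)) by rw [one_div_div]]
        exact one_div_le_one_div_of_le (by positivity) hab
      rw [hδ', hM']
      field_simp
  -- iteration bound
  have hkey := key (jstar - 1) (fun i hi1 hi2 => hmin' i hi1 (by omega))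
  have hsub : jstar - 1 + 1 = jstar := by omega
  rw [hsub] at hkey
  have hcast : ((jstar - 1 : ℕ) : ℝ) = (jstar : ℝ) - 1 := by
    rw [Nat.cast_sub hj1]; norm_num
  rw [hcast] at hkey
  have hbound1 : (jstar : ℝ) ≤ 1 + M * (f (x 1) - f (x jstar)) := by
    nlinarith [hkey, hMδ, hM0.le]
  have hD : f (x 1) - f (x jstar) ≤ Δ := by rw [hx1]; exact hΔ _
  have hbound2 : (jstar : ℝ) ≤ 1 + M * Δ := by nlinarith [hbound1, hD, hM0.le]
  refine ⟨jstar, hj1, hjP, hmin', hbound1, hbound2, ?_⟩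
  intro u hu
  have h1 := hmin jstar hj1 u hu
  have h2 : max ε₂ ‖g jstar‖ ≤ max ε₂ ε₁ := max_le_max le_rfl hjP.2
  have h3 : ε₂ ≤ max ε₂ ε₁ := le_max_left _ _
  have h4 := hjP.1
  have h5 : (0:ℝ) < max ε₂ ε₁ := lt_of_lt_of_le hε₂ h3
  calc ⟪(fderiv ℝ (gradient f) (x jstar)) u, u⟫
      ≥ q jstar - max ε₂ ‖g jstar‖ / 2 := h1
    _ ≥ -ε₂ / 2 - max ε₂ ε₁ / 2 := by linarith [h2, h4]
    _ ≥ -(max ε₂ ε₁) := by linarith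
end

section
/- Let f : ℝ^d → ℝ be twice continuously differentiable with L1-Lipschitz gradient and L2-Lipschitz Hessian, let ε₂ ∈ (0,1), and let H be a symmetric d×d matrix (an inexact Hessian at x) with ‖H − ∇²f(x)‖₂ ≤ ε₃ where 0 ≤ ε₃ ≤ ε₂/12. Let v be a unit vector and define the iH-NCG update: if −(ε₂²/(2·L2²))·vᵀHv − 5·ε₂³/(24·L2²) > ‖∇f(x)‖²/(2·L1), set x⁺ = x − (ε₂/L2)·sign(vᵀ∇f(x))·v; otherwise set x⁺ = x − (1/L1)·∇f(x). Then f(x) − f(x⁺) ≥ max( −(ε₂²/(2·L2²))·vᵀHv − 5·ε₂³/(24·L2²), ‖∇f(x)‖²/(2·L1) ). Moreover, if vᵀHv ≤ −ε₂/2, then f(x) − f(x⁺) ≥ max( ‖∇f(x)‖²/(2·L1), ε₂³/(24·L2²) ). -/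
set_option maxHeartbeats 1600000

open scoped RealInnerProductSpace

section Aux

variable {E : Type*} [NormedAddCommGroup E] [InnerProductSpace ℝ E] [CompleteSpace E]

lemma aux_le_of_deriv_nonpos {g g' : ℝ → ℝ} (hg : ∀ t, HasDerivAt g (g' t) t)
    (h : ∀ t ∈ Set.Ioo (0:ℝ) 1, g' t ≤ 0) : ∀ t ∈ Set.Icc (0:ℝ) 1, g t ≤ g 0 := by
  have hant : AntitoneOn g (Set.Icc (0:ℝ) 1) := by
    apply antitoneOn_of_deriv_nonpos (convex_Icc 0 1)
    · exact fun t _ => (hg t).continuousAt.continuousWithinAt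
    · exact fun t _ => (hg t).differentiableAt.differentiableWithinAt
    · intro t ht
      rw [interior_Icc] at ht
      rw [(hg t).deriv]
      exact h t ht
  intro t ht
  exact hant (Set.left_mem_Icc.2 zero_le_one) ht ht.1

lemma aux_hasDerivAt_line {f : E → ℝ} (hf : Differentiable ℝ f) (x u : E) (t : ℝ) :
    HasDerivAt (fun s : ℝ => f (x + s • u)) ⟪gradient f (x + t • u), u⟫ t := by
  have hc : HasDerivAt (fun s : ℝ => x + s • u) u t := by
    simpa using ((hasDerivAt_id t).smul_const u).const_add x
  have h2 := ((hf (x + t • u)).hasGradientAt.hasFDerivAt).comp_hasDerivAt t hc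
  simpa [InnerProductSpace.toDual_apply_apply, Function.comp_def] using h2

lemma aux_grad_diff {f : E → ℝ} (hf : ContDiff ℝ 2 f) : Differentiable ℝ (gradient f) := by
  have h1 : Differentiable ℝ (fderiv ℝ f) :=
    (hf.fderiv_right (m := 1) (by norm_num)).differentiable (by norm_num)
  have : gradient f = fun y => (InnerProductSpace.toDual ℝ E).symm (fderiv ℝ f y) := rfl
  rw [this]
  exact (InnerProductSpace.toDual ℝ E).symm.toContinuousLinearEquiv.differentiable.comp h1

lemma aux_hasDerivAt_line2 {f : E → ℝ} (hg : Differentiable ℝ (gradient f)) (x u : E) (t : ℝ) :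
    HasDerivAt (fun s : ℝ => ⟪gradient f (x + s • u), u⟫)
      ⟪(fderiv ℝ (gradient f) (x + t • u)) u, u⟫ t := by
  have hc : HasDerivAt (fun s : ℝ => x + s • u) u t := by
    simpa using ((hasDerivAt_id t).smul_const u).const_add x
  have h2 : HasDerivAt (fun s : ℝ => gradient f (x + s • u))
      ((fderiv ℝ (gradient f) (x + t • u)) u) t :=
    by have := (hg (x + t • u)).hasFDerivAt.comp_hasDerivAt t hc; exact this
  simpa using h2.inner ℝ (hasDerivAt_const t u)

lemma aux_inner_clm_bound (B : E →L[ℝ] E) (u w : E) : ⟪B u, w⟫ ≤ ‖B‖ * ‖u‖ * ‖w‖ := by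
  calc ⟪B u, w⟫ ≤ ‖B u‖ * ‖w‖ := real_inner_le_norm _ _
  _ ≤ ‖B‖ * ‖u‖ * ‖w‖ := by
      have := B.le_opNorm u
      gcongr

/-- First-order descent lemma. -/
lemma taylor1 {f : E → ℝ} {L1 : ℝ}
    (hf : Differentiable ℝ f)
    (hglip : ∀ a b : E, ‖gradient f a - gradient f b‖ ≤ L1 * ‖a - b‖)
    (x u : E) :
    f (x + u) ≤ f x + ⟪gradient f x, u⟫ + L1 / 2 * ‖u‖ ^ 2 := by
  set ip := ⟪gradient f x, u⟫ with hip
  set g : ℝ → ℝ := fun t => f (x + t • u) - t * ip - L1 / 2 * (t ^ 2 * ‖u‖ ^ 2) with hgdef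
  have hg : ∀ t : ℝ, HasDerivAt g
      (⟪gradient f (x + t • u), u⟫ - ip - L1 * t * ‖u‖ ^ 2) t := by
    intro t
    have h1 := aux_hasDerivAt_line hf x u t
    have h2 : HasDerivAt (fun s : ℝ => s * ip) ip t := by
      simpa using (hasDerivAt_id t).mul_const ip
    have h3 : HasDerivAt (fun s : ℝ => L1 / 2 * (s ^ 2 * ‖u‖ ^ 2))
        (L1 / 2 * ((2 * t ^ 1) * ‖u‖ ^ 2)) t :=
      ((hasDerivAt_pow 2 t).mul_const _).const_mul _
    have := (h1.sub h2).sub h3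
    refine this.congr_deriv ?_
    ring
  have hkey : g 1 ≤ g 0 := by
    refine aux_le_of_deriv_nonpos hg ?_ 1 (Set.right_mem_Icc.2 zero_le_one)
    intro t ht
    have hb : ⟪gradient f (x + t • u) - gradient f x, u⟫ ≤ L1 * t * ‖u‖ ^ 2 := by
      calc ⟪gradient f (x + t • u) - gradient f x, u⟫
          ≤ ‖gradient f (x + t • u) - gradient f x‖ * ‖u‖ := real_inner_le_norm _ _
        _ ≤ (L1 * ‖(x + t • u) - x‖) * ‖u‖ := by
            have := hglip (x + t • u) x
            gcongr
        _ = L1 * t * ‖u‖ ^ 2 := by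
            rw [add_sub_cancel_left, norm_smul, Real.norm_eq_abs, abs_of_pos ht.1]
            ring
    rw [inner_sub_left] at hb
    linarith
  have h0 : g 0 = f x := by simp [hgdef]
  have h1 : g 1 = f (x + u) - ip - L1 / 2 * ‖u‖ ^ 2 := by simp [hgdef]
  rw [h0, h1] at hkey
  linarith

/-- Second-order (cubic) descent lemma. -/
lemma taylor2 {f : E → ℝ} {L2 : ℝ}
    (hf : ContDiff ℝ 2 f)
    (hHlip : ∀ a b : E, ‖fderiv ℝ (gradient f) a - fderiv ℝ (gradient f) b‖ ≤ L2 * ‖a - b‖)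
    (x u : E) :
    f (x + u) ≤ f x + ⟪gradient f x, u⟫
      + 1 / 2 * ⟪(fderiv ℝ (gradient f) x) u, u⟫ + L2 / 6 * ‖u‖ ^ 3 := by
  have hdf : Differentiable ℝ f := hf.differentiable (by norm_num)
  have hdg : Differentiable ℝ (gradient f) := aux_grad_diff hf
  set A := fderiv ℝ (gradient f) with hA
  set ψ : ℝ → ℝ := fun t => ⟪gradient f (x + t • u), u⟫ with hψ
  set q : ℝ := ⟪A x u, u⟫ with hq
  set c : ℝ := L2 * ‖u‖ ^ 3 with hc
  -- Step 1: ψ t ≤ ψ 0 + t q + c/2 t² on [0,1]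
  have step1 : ∀ t ∈ Set.Icc (0:ℝ) 1, ψ t ≤ ψ 0 + t * q + c / 2 * t ^ 2 := by
    set k : ℝ → ℝ := fun t => ψ t - t * q - c / 2 * t ^ 2 with hk
    have hkd : ∀ t : ℝ, HasDerivAt k (⟪A (x + t • u) u, u⟫ - q - c * t) t := by
      intro t
      have h1 := aux_hasDerivAt_line2 hdg x u t
      have h2 : HasDerivAt (fun s : ℝ => s * q) q t := by
        simpa using (hasDerivAt_id t).mul_const q
      have h3 : HasDerivAt (fun s : ℝ => c / 2 * s ^ 2) (c / 2 * (2 * t ^ 1)) t :=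
        (hasDerivAt_pow 2 t).const_mul _
      have := (h1.sub h2).sub h3
      refine this.congr_deriv ?_
      ring
    have hkle : ∀ t ∈ Set.Icc (0:ℝ) 1, k t ≤ k 0 := by
      refine aux_le_of_deriv_nonpos hkd ?_
      intro t ht
      have hb : ⟪A (x + t • u) u - A x u, u⟫ ≤ c * t := by
        calc ⟪A (x + t • u) u - A x u, u⟫ = ⟪(A (x + t • u) - A x) u, u⟫ := by
              rw [ContinuousLinearMap.sub_apply]
          _ ≤ ‖A (x + t • u) - A x‖ * ‖u‖ * ‖u‖ := aux_inner_clm_bound _ _ _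
          _ ≤ (L2 * ‖(x + t • u) - x‖) * ‖u‖ * ‖u‖ := by
              have := hHlip (x + t • u) x
              gcongr
          _ = c * t := by
              rw [add_sub_cancel_left, norm_smul, Real.norm_eq_abs, abs_of_pos ht.1, hc]
              ring
      rw [inner_sub_left] at hb
      linarith [hb, hq.le, hq.ge]
    intro t ht
    have := hkle t ht
    simp only [hk] at this
    have hk0 : ψ 0 - 0 * q - c / 2 * 0 ^ 2 = ψ 0 := by ring
    rw [hk0] at this
    linarith
  -- Step 2
  set h : ℝ → ℝ := fun t => f (x + t • u) - t * ψ 0 - q / 2 * t ^ 2 - c / 6 * t ^ 3 with hh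
  have hhd : ∀ t : ℝ, HasDerivAt h (ψ t - ψ 0 - q * t - c / 2 * t ^ 2) t := by
    intro t
    have h1 := aux_hasDerivAt_line hdf x u t
    have h2 : HasDerivAt (fun s : ℝ => s * ψ 0) (ψ 0) t := by
      simpa using (hasDerivAt_id t).mul_const (ψ 0)
    have h3 : HasDerivAt (fun s : ℝ => q / 2 * s ^ 2) (q / 2 * (2 * t ^ 1)) t :=
      (hasDerivAt_pow 2 t).const_mul _
    have h4 : HasDerivAt (fun s : ℝ => c / 6 * s ^ 3) (c / 6 * (3 * t ^ 2)) t :=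
      (hasDerivAt_pow 3 t).const_mul _
    have := ((h1.sub h2).sub h3).sub h4
    refine this.congr_deriv ?_
    ring
  have hkey : h 1 ≤ h 0 := by
    refine aux_le_of_deriv_nonpos hhd ?_ 1 (Set.right_mem_Icc.2 zero_le_one)
    intro t ht
    have := step1 t (Set.mem_Icc_of_Ioo ht)
    linarith
  have h0 : h 0 = f x := by simp [hh]
  have h1 : h 1 = f (x + u) - ψ 0 - q / 2 - c / 6 := by
    simp [hh]
  have hψ0 : ψ 0 = ⟪gradient f x, u⟫ := by simp [hψ]
  rw [h0, h1, hψ0] at hkey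
  rw [hq] at hkey
  rw [hc] at hkey
  linarith

end Aux

/-- Lemma on the iH-NCG step: objective decrease of a single iH-NCG step
using an inexact Hessian `H` with `‖H - ∇²f(x)‖₂ ≤ ε₃ ≤ ε₂/12`. -/
theorem iH_NCG_step_decrease {d : ℕ}
    (f : EuclideanSpace ℝ (Fin d) → ℝ) (L1 L2 ε₂ ε₃ : ℝ)
    (hL1 : 0 < L1) (hL2 : 0 < L2) (hε₂ : 0 < ε₂) (hε₂1 : ε₂ < 1)
    (hε₃0 : 0 ≤ ε₃) (hε₃ : ε₃ ≤ ε₂ / 12)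
    (hf : ContDiff ℝ 2 f)
    (hglip : ∀ a b : EuclideanSpace ℝ (Fin d),
      ‖gradient f a - gradient f b‖ ≤ L1 * ‖a - b‖)
    (hHlip : ∀ a b : EuclideanSpace ℝ (Fin d),
      ‖fderiv ℝ (gradient f) a - fderiv ℝ (gradient f) b‖ ≤ L2 * ‖a - b‖)
    (x : EuclideanSpace ℝ (Fin d))
    (H : EuclideanSpace ℝ (Fin d) →L[ℝ] EuclideanSpace ℝ (Fin d))
    (hHsym : ∀ u w : EuclideanSpace ℝ (Fin d), ⟪H u, w⟫ = ⟪u, H w⟫)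
    (hHapprox : ‖H - fderiv ℝ (gradient f) x‖ ≤ ε₃)
    (v : EuclideanSpace ℝ (Fin d)) (hv : ‖v‖ = 1)
    (xp : EuclideanSpace ℝ (Fin d))
    (hxp : xp =
      if -(ε₂ ^ 2 / (2 * L2 ^ 2)) * ⟪H v, v⟫ - 5 * ε₂ ^ 3 / (24 * L2 ^ 2) >
          ‖gradient f x‖ ^ 2 / (2 * L1) then
        x - ((ε₂ / L2) * sgn ⟪gradient f x, v⟫) • v
      else
        x - (1 / L1) • gradient f x) :
    f x - f xp ≥
      max (-(ε₂ ^ 2 / (2 * L2 ^ 2)) * ⟪H v, v⟫ - 5 * ε₂ ^ 3 / (24 * L2 ^ 2))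
        (‖gradient f x‖ ^ 2 / (2 * L1)) ∧
    (⟪H v, v⟫ ≤ -ε₂ / 2 →
      f x - f xp ≥
        max (‖gradient f x‖ ^ 2 / (2 * L1)) (ε₂ ^ 3 / (24 * L2 ^ 2))) := by
  have hdf : Differentiable ℝ f := hf.differentiable (by norm_num)
  set g := gradient f x with hg
  set A := fderiv ℝ (gradient f) with hA
  set Tnc : ℝ := -(ε₂ ^ 2 / (2 * L2 ^ 2)) * ⟪H v, v⟫ - 5 * ε₂ ^ 3 / (24 * L2 ^ 2) with hTnc
  set Tg : ℝ := ‖g‖ ^ 2 / (2 * L1) with hTg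
  have main : f x - f xp ≥ max Tnc Tg := by
    by_cases hcond : Tnc > Tg
    · -- negative curvature step
      rw [if_pos hcond] at hxp
      set s : ℝ := sgn ⟪g, v⟫ with hs
      set η : ℝ := ε₂ / L2 with hη
      have hηpos : 0 < η := div_pos hε₂ hL2
      have hsabs : |s| = 1 := by
        rw [hs]; unfold sgn; split_ifs <;> simp
      have hsmul : s * ⟪g, v⟫ = |⟪g, v⟫| := by
        rw [hs]; unfold sgn; split_ifs with h
        · rw [abs_of_nonneg h]; ring
        · push_neg at h
          rw [abs_of_neg h]; ring
      set u : EuclideanSpace ℝ (Fin d) := -(η * s) • v with hu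
      have hxpu : xp = x + u := by
        rw [hxp, hu, neg_smul, sub_eq_add_neg]
      have hnu : ‖u‖ = η := by
        rw [hu, norm_smul, hv, Real.norm_eq_abs, abs_neg, abs_mul, hsabs,
          abs_of_pos hηpos]
        ring
      have hinner1 : ⟪g, u⟫ ≤ 0 := by
        rw [hu, real_inner_smul_right]
        have : -(η * s) * ⟪g, v⟫ = -(η * (s * ⟪g, v⟫)) := by ring
        rw [this, hsmul]
        have : 0 ≤ η * |⟪g, v⟫| := mul_nonneg hηpos.le (abs_nonneg _)
        linarith
      have hinner2 : ⟪A x u, u⟫ = η ^ 2 * ⟪A x v, v⟫ := by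
        rw [hu, map_smul, real_inner_smul_left, real_inner_smul_right]
        have hs2 : s ^ 2 = 1 := by
          have := sq_abs s; rw [hsabs] at this; simpa using this.symm
        have hr : -(η * s) * (-(η * s) * ⟪A x v, v⟫) = s ^ 2 * (η ^ 2 * ⟪A x v, v⟫) := by
          ring
        rw [hr, hs2, one_mul]
      have hAH : ⟪A x v, v⟫ ≤ ⟪H v, v⟫ + ε₃ := by
        have h1 : ⟪(A x - H) v, v⟫ ≤ ‖A x - H‖ * ‖v‖ * ‖v‖ := aux_inner_clm_bound _ _ _
        have h2 : ‖A x - H‖ ≤ ε₃ := by rwa [norm_sub_rev]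
        rw [ContinuousLinearMap.sub_apply, inner_sub_left, hv] at h1
        nlinarith [norm_nonneg (A x - H)]
      have htay := taylor2 hf hHlip x u
      rw [← hxpu, ← hg, ← hA] at htay
      have hbound : f x - f xp ≥ -(η^2/2) * ⟪H v, v⟫ - η^2/2 * ε₃ - L2/6 * η^3 := by
        have h1 : 1/2 * ⟪A x u, u⟫ ≤ η^2/2 * (⟪H v, v⟫ + ε₃) := by
          rw [hinner2]
          nlinarith [hAH, sq_nonneg η]
        rw [hnu] at htay
        linarith
      have hmax : max Tnc Tg = Tnc := max_eq_left hcond.le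
      rw [hmax]
      have hη2 : η ^ 2 = ε₂ ^ 2 / L2 ^ 2 := by rw [hη, div_pow]
      have hη3 : η ^ 3 = ε₂ ^ 3 / L2 ^ 3 := by rw [hη, div_pow]
      have hL2ne : L2 ≠ 0 := ne_of_gt hL2
      have he1 : η ^ 2 / 2 = ε₂ ^ 2 / (2 * L2 ^ 2) := by
        rw [hη]; field_simp
      have he2 : L2 / 6 * η ^ 3 = 4 * ε₂ ^ 3 / (24 * L2 ^ 2) := by
        rw [hη]; field_simp; ring
      have he3 : η ^ 2 / 2 * ε₃ ≤ ε₂ ^ 3 / (24 * L2 ^ 2) := by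
        rw [he1]
        calc ε₂ ^ 2 / (2 * L2 ^ 2) * ε₃ ≤ ε₂ ^ 2 / (2 * L2 ^ 2) * (ε₂ / 12) := by
              exact mul_le_mul_of_nonneg_left hε₃ (by positivity)
          _ = ε₂ ^ 3 / (24 * L2 ^ 2) := by field_simp; ring
      have hfin : -(η^2/2) * ⟪H v, v⟫ - η^2/2 * ε₃ - L2/6 * η^3 ≥ Tnc := by
        rw [hTnc, hη]
        rw [ge_iff_le, ← sub_nonneg]
        have hL2' : L2 ≠ 0 := ne_of_gt hL2
        have hdiff : (-((ε₂/L2)^2/2) * ⟪H v, v⟫ - (ε₂/L2)^2/2 * ε₃ - L2/6 * (ε₂/L2)^3)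
            - (-(ε₂^2/(2*L2^2)) * ⟪H v, v⟫ - 5*ε₂^3/(24*L2^2))
            = ε₂^2 * (ε₂/12 - ε₃) / (2*L2^2) := by
          field_simp
          ring
        rw [hdiff]
        exact div_nonneg (mul_nonneg (sq_nonneg _) (by linarith)) (by positivity)
      exact le_trans hfin hbound
    · -- gradient step
      rw [if_neg hcond] at hxp
      push_neg at hcond
      set u : EuclideanSpace ℝ (Fin d) := -(1 / L1) • g with hu
      have hxpu : xp = x + u := by rw [hxp, hu, neg_smul, sub_eq_add_neg]
      have htay := taylor1 hdf hglip x u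
      rw [← hxpu, ← hg] at htay
      have hinner : ⟪g, u⟫ = -(1/L1) * ‖g‖^2 := by
        rw [hu, real_inner_smul_right, real_inner_self_eq_norm_sq]
      have hnu : ‖u‖ ^ 2 = (1/L1)^2 * ‖g‖^2 := by
        rw [hu, norm_smul]
        rw [Real.norm_eq_abs, abs_neg, abs_of_pos (by positivity : (0:ℝ) < 1/L1)]
        ring
      have hstep : f x - f xp ≥ ‖g‖^2 / (2 * L1) := by
        rw [hinner, hnu] at htay
        have hL1' : (0:ℝ) < L1 := hL1
        have : L1 / 2 * ((1/L1)^2 * ‖g‖^2) = ‖g‖^2 / (2 * L1) := by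
          field_simp
        rw [this] at htay
        have h2 : -(1/L1) * ‖g‖^2 + ‖g‖^2/(2*L1) = -(‖g‖^2/(2*L1)) := by
          field_simp; ring
        linarith
      have hmax : max Tnc Tg = Tg := max_eq_right hcond
      rw [hmax]; exact hstep
  refine ⟨main, fun hneg => ?_⟩
  have h1 : ε₂ ^ 3 / (24 * L2 ^ 2) ≤ Tnc := by
    rw [hTnc]
    have hc : 0 < ε₂ ^ 2 / (2 * L2 ^ 2) := by positivity
    have h2 : -(ε₂ ^ 2 / (2 * L2 ^ 2)) * ⟪H v, v⟫ ≥ (ε₂ ^ 2 / (2 * L2 ^ 2)) * (ε₂/2) := by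
      nlinarith
    have h3 : (ε₂ ^ 2 / (2 * L2 ^ 2)) * (ε₂/2) - 5 * ε₂ ^ 3 / (24 * L2 ^ 2)
        = ε₂ ^ 3 / (24 * L2 ^ 2) := by
      field_simp; ring
    linarith
  have h2 : max Tg (ε₂ ^ 3 / (24 * L2 ^ 2)) ≤ max Tnc Tg :=
    max_le (le_max_right _ _) (h1.trans (le_max_left _ _))
  exact le_trans h2 main
end
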